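/- Let A be a type. The colimit in the category of types of the functor (Finˢ)ᵒᵖ ⥤ Type given on objects by I ↦ (I → A), and sending (the opposite of) a surjection α : I ↠ J of Finˢ to the precomposition map (J → A) → (I → A), g ↦ g ∘ α, is canonically bijective to the set of finite nonempty subsets of A; the bijection is induced by sending a function f : I → A to its image f(I). -/

import Mathlib

open CategoryTheory Limits Opposite

/-- A skeleton of the category `Finˢ` of finite nonempty types with surjective maps:
objects are positive natural numbers `n` (standing for `Fin n`), morphisms are
surjections. -/
structure FinSurj : Type where
  n : ℕ
  pos : 0 < n

instance : Category FinSurj where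
  Hom a b := { f : Fin a.n → Fin b.n // Function.Surjective f }
  id a := ⟨id, Function.surjective_id⟩
  comp f g := ⟨g.1 ∘ f.1, g.2.comp f.2⟩
  id_comp f := Subtype.ext rfl
  comp_id f := Subtype.ext rfl
  assoc f g h := Subtype.ext rfl

/-- The functor `(Finˢ)ᵒᵖ ⥤ Type` given on objects by `I ↦ (I → A)` and sending (the
opposite of) a surjection `α` to precomposition with `α`. -/
def finSurjPow (A : Type) : FinSurjᵒᵖ ⥤ Type where
  obj I := Fin I.unop.n → A
  map f := TypeCat.ofHom fun g => g ∘ f.unop.1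
  map_id := by intros; rfl
  map_comp := by intros; rfl

noncomputable section

/-- The cocone on `finSurjPow A` with point the finite nonempty subsets of `A`. -/
def finSurjCocone (A : Type) : Cocone (finSurjPow A) where
  pt := { s : Set A // s.Finite ∧ s.Nonempty }
  ι :=
    { app := fun I => TypeCat.ofHom fun f => ⟨Set.range f, Set.finite_range f,
        Set.range_nonempty (h := ⟨⟨0, I.unop.pos⟩⟩) f⟩
      naturality := by
        intro I J φ
        ext g
        exact Subtype.ext (φ.unop.2.range_comp g) }

theorem finSurjCocone_naturality_check (A : Type) (I J : FinSurjᵒᵖ) (φ : I ⟶ J)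
    (g : Fin I.unop.n → A) : Set.range (g ∘ φ.unop.1) = Set.range g :=
  φ.unop.2.range_comp g

/-- The colimit over `(Finˢ)ᵒᵖ` of the powers `I ↦ (I → A)` is canonically bijective to
the set of finite nonempty subsets of `A`, via `f ↦ image of f`. -/
theorem stmt0 (A : Type) :
    ∃ e : colimit (finSurjPow A) ≃ { s : Set A // s.Finite ∧ s.Nonempty },
      ∀ (I : FinSurj) (f : Fin I.n → A),
        (e (colimit.ι (finSurjPow A) (op I) f)).1 = Set.range f := by
  classical
  set d : colimit (finSurjPow A) → { s : Set A // s.Finite ∧ s.Nonempty } :=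
    ⇑(colimit.desc (finSurjPow A) (finSurjCocone A)) with hd
  have hdι : ∀ (I : FinSurj) (f : Fin I.n → A),
      (d (colimit.ι (finSurjPow A) (op I) f)).1 = Set.range f := by
    intro I f
    have := colimit.ι_desc_apply (finSurjCocone A) (op I) f
    rw [hd]
    exact congrArg Subtype.val this
  -- the canonical representative of a finite nonempty set
  have key : ∀ (I : FinSurj) (f : Fin I.n → A),
      ∀ (k : ℕ) (hk : 0 < k) (e : Fin k ≃ Set.range f),
      colimit.ι (finSurjPow A) (op I) f
        = colimit.ι (finSurjPow A) (op ⟨k, hk⟩) (fun j => (e j : A)) := by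
    intro I f k hk e
    obtain ⟨n, pos⟩ := I
    let α : (⟨n, pos⟩ : FinSurj) ⟶ ⟨k, hk⟩ :=
      ⟨fun i => e.symm ⟨f i, Set.mem_range_self i⟩, by
        intro j
        obtain ⟨i, hi⟩ := (e j).2
        exact ⟨i, by simp [hi]⟩⟩
    have hw := colimit.w_apply (finSurjPow A) α.op (fun j => (e j : A))
    have h1 : (finSurjPow A).map α.op (fun j => (e j : A)) = f := by
      funext i
      show ((e (e.symm ⟨f i, _⟩)) : A) = f i
      simp
    simp only [types_comp_apply] at hw
    rw [h1] at hw
    exact hw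
  have hbij : Function.Bijective d := by
    constructor
    · intro x y hxy
      obtain ⟨I, f, rfl⟩ := Types.jointly_surjective' (F := finSurjPow A) x
      obtain ⟨J, g, rfl⟩ := Types.jointly_surjective' (F := finSurjPow A) y
      have hr : Set.range f = Set.range g := by
        have := congrArg Subtype.val hxy
        rwa [hdι I.unop f, hdι J.unop g] at this <;> try rfl
      have hfin : (Set.range f).Finite := Set.finite_range f
      haveI := hfin.fintype
      have hk : 0 < Fintype.card (Set.range f) :=
        Fintype.card_pos_iff.mpr (Set.range_nonempty (h := ⟨⟨0, I.unop.pos⟩⟩) f).to_subtype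
      let e : Fin (Fintype.card (Set.range f)) ≃ Set.range f := (Fintype.equivFin _).symm
      have h1 := key I.unop f _ hk e
      have h2 := key J.unop g _ hk (e.trans (Equiv.setCongr hr))
      simp only [op_unop] at h1 h2
      rw [h1, h2]
      rfl
    · intro s
      haveI := s.2.1.fintype
      have hk : 0 < Fintype.card s.1 := Fintype.card_pos_iff.mpr s.2.2.to_subtype
      let e : Fin (Fintype.card s.1) ≃ s.1 := (Fintype.equivFin _).symm
      refine ⟨colimit.ι (finSurjPow A) (op ⟨_, hk⟩) (fun j => (e j : A)), ?_⟩
      apply Subtype.ext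
      rw [hdι]
      ext a
      constructor
      · rintro ⟨j, rfl⟩; exact (e j).2
      · intro ha; exact ⟨e.symm ⟨a, ha⟩, by simp⟩
  exact ⟨Equiv.ofBijective d hbij, hdι⟩
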